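/- Let Σ_1, Σ_2 be positive definite p×p matrices, and let λ_1, ..., λ_p > 0 be the eigenvalues of Σ_1^{-1}Σ_2 ordered such that λ_1 + 1/λ_1 ≥ ... ≥ λ_p + 1/λ_p, with corresponding eigenvectors φ_1,...,φ_p. Then for the projection W* = [φ_1,...,φ_q], the embedded Bhattacharyya overlap equals (π_1 π_2)^{1/2} · ( ∏_{j=1}^q (λ_j^{1/2} + λ_j^{-1/2})/2 )^{-1/2}. -/

import Mathlib

open Matrix

/-- Embedded Bhattacharyya overlap of two mean-zero Gaussians under the
projection `W`. -/
noncomputable def embOverlap {p q : ℕ} (π1 π2 : ℝ)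
    (S1 S2 : Matrix (Fin p) (Fin p) ℝ) (W : Matrix (Fin p) (Fin q) ℝ) : ℝ :=
  Real.sqrt (π1 * π2) *
    ((((1 : ℝ) / 2) • (Wᵀ * (S1 + S2) * W)).det /
      Real.sqrt ((Wᵀ * S1 * W).det * (Wᵀ * S2 * W).det)) ^ (-(1 : ℝ) / 2)

private lemma sqrt_prod_aux {ι : Type*} (s : Finset ι) (f : ι → ℝ)
    (hf : ∀ i ∈ s, 0 ≤ f i) :
    Real.sqrt (∏ i ∈ s, f i) = ∏ i ∈ s, Real.sqrt (f i) := by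
  induction s using Finset.cons_induction with
  | empty => simp
  | cons a s ha ih =>
    rw [Finset.prod_cons, Finset.prod_cons, Real.sqrt_mul (hf a (Finset.mem_cons_self a s)),
      ih (fun i hi => hf i (Finset.mem_cons_of_mem hi))]

/-- Value of the embedded Bhattacharyya overlap at the projection made of the
first `q` eigenvectors of `S1⁻¹ S2`. -/
theorem embOverlap_eigen_projection
    {p q : ℕ} (hq : q ≤ p)
    (S1 S2 : Matrix (Fin p) (Fin p) ℝ) (h1 : S1.PosDef) (h2 : S2.PosDef)
    (π1 π2 : ℝ) (hπ1 : 0 < π1) (hπ2 : 0 < π2) (hsum : π1 + π2 = 1)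
    (lam : Fin p → ℝ) (φ : Fin p → (Fin p → ℝ))
    (hlampos : ∀ j, 0 < lam j)
    (heig : ∀ j, (S1⁻¹ * S2).mulVec (φ j) = lam j • φ j)
    (hindep : LinearIndependent ℝ φ)
    (horder : ∀ i j : Fin p, i ≤ j → lam j + (lam j)⁻¹ ≤ lam i + (lam i)⁻¹) :
    embOverlap π1 π2 S1 S2 (Matrix.of fun i (j : Fin q) => φ (Fin.castLE hq j) i)
      = Real.sqrt (π1 * π2) *
        (∏ j : Fin q,
          (Real.sqrt (lam (Fin.castLE hq j))
            + (Real.sqrt (lam (Fin.castLE hq j)))⁻¹) / 2) ^ (-(1 : ℝ) / 2) := by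
  classical
  set W : Matrix (Fin p) (Fin q) ℝ :=
    Matrix.of fun i (j : Fin q) => φ (Fin.castLE hq j) i with hW
  set μ : Fin q → ℝ := fun j => lam (Fin.castLE hq j) with hμ
  have hμpos : ∀ j, 0 < μ j := fun j => hlampos _
  set D : Matrix (Fin q) (Fin q) ℝ := Matrix.diagonal μ with hD
  have hS1det : IsUnit S1.det := isUnit_iff_ne_zero.2 h1.det_pos.ne'
  -- S2 φ_j = λ_j S1 φ_j
  have hS2φ : ∀ j, S2 *ᵥ φ j = lam j • (S1 *ᵥ φ j) := by
    intro j
    have h := congrArg (fun v => S1 *ᵥ v) (heig j)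
    simp only [mulVec_mulVec, mulVec_smul] at h
    rwa [Matrix.mul_nonsing_inv_cancel_left _ _ hS1det] at h
  -- S2 * W = S1 * W * D
  have hSW : S2 * W = S1 * W * D := by
    ext i j
    have h := congrFun (hS2φ (Fin.castLE hq j)) i
    simp only [mulVec, dotProduct, Pi.smul_apply, smul_eq_mul] at h
    rw [hD, Matrix.mul_diagonal]
    simp only [Matrix.mul_apply, hW, Matrix.of_apply, hμ]
    rw [h]; ring
  set A : Matrix (Fin q) (Fin q) ℝ := Wᵀ * S1 * W with hA
  have h3 : Wᵀ * S2 * W = A * D := by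
    rw [Matrix.mul_assoc, hSW, hA]
    simp only [Matrix.mul_assoc]
  have h4 : Wᵀ * (S1 + S2) * W = A * (1 + D) := by
    rw [Matrix.mul_add, Matrix.add_mul, h3, hA, Matrix.mul_add, Matrix.mul_one]
  -- W has independent columns
  have hWne : ∀ x : Fin q → ℝ, x ≠ 0 → W *ᵥ x ≠ 0 := by
    intro x hx hcon
    have hind2 : LinearIndependent ℝ (φ ∘ Fin.castLE hq) :=
      hindep.comp _ (Fin.castLE_injective hq)
    have := Fintype.linearIndependent_iff.1 hind2 x ?_
    · exact hx (funext this)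
    · funext i
      have := congrFun hcon i
      simpa [hW, mulVec, dotProduct, Finset.sum_apply, mul_comm] using this
  -- A is positive definite
  have hApos : A.PosDef := by
    rw [Matrix.posDef_iff_dotProduct_mulVec]
    constructor
    · show Aᴴ = A
      have hS1 : S1ᴴ = S1 := h1.isHermitian
      calc Aᴴ = Wᴴ * S1ᴴ * (Wᵀ)ᴴ := by
              rw [hA, Matrix.conjTranspose_mul, Matrix.conjTranspose_mul, Matrix.mul_assoc]
        _ = Wᵀ * S1 * W := by rw [hS1]; rfl
        _ = A := hA.symm
    · intro x hx
      have hx' : W *ᵥ x ≠ 0 := hWne x hx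
      have := h1.dotProduct_mulVec_pos hx'
      simpa [hA, ← mulVec_mulVec, Matrix.dotProduct_mulVec, vecMul_transpose,
        Matrix.mul_assoc] using this
  have hdet : 0 < A.det := hApos.det_pos
  -- determinant computations
  have hdet2 : (Wᵀ * S2 * W).det = A.det * ∏ j, μ j := by
    rw [h3, Matrix.det_mul, hD, Matrix.det_diagonal]
  have h1D : (1 : Matrix (Fin q) (Fin q) ℝ) + D = Matrix.diagonal (fun j => 1 + μ j) := by
    ext i j
    by_cases h : i = j <;>
      simp [hD, Matrix.diagonal_apply, Matrix.one_apply, h]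
  have hdet1 : (((1 : ℝ) / 2) • (Wᵀ * (S1 + S2) * W)).det
      = ((1 : ℝ) / 2) ^ q * (A.det * ∏ j, (1 + μ j)) := by
    rw [h4, Matrix.det_smul, Matrix.det_mul, h1D, Matrix.det_diagonal]
    simp
  have hsqrtμ : Real.sqrt (∏ j, μ j) = ∏ j, Real.sqrt (μ j) :=
    sqrt_prod_aux _ _ (fun j _ => (hμpos j).le)
  have hsq : Real.sqrt (A.det * (A.det * ∏ j, μ j)) = A.det * ∏ j, Real.sqrt (μ j) := by
    rw [← mul_assoc, Real.sqrt_mul (mul_self_nonneg _), Real.sqrt_mul_self hdet.le, hsqrtμ]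
  -- the key scalar identity
  have hkey : (((1 : ℝ) / 2) • (Wᵀ * (S1 + S2) * W)).det /
      Real.sqrt ((Wᵀ * S1 * W).det * (Wᵀ * S2 * W).det)
      = ∏ j : Fin q, (Real.sqrt (μ j) + (Real.sqrt (μ j))⁻¹) / 2 := by
    rw [hdet1, ← hA, hdet2, hsq]
    have hfac : ∀ j : Fin q, (Real.sqrt (μ j) + (Real.sqrt (μ j))⁻¹) / 2
        = (1 + μ j) / (2 * Real.sqrt (μ j)) := by
      intro j
      have hs : (0 : ℝ) < Real.sqrt (μ j) := Real.sqrt_pos.2 (hμpos j)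
      have hss : Real.sqrt (μ j) * Real.sqrt (μ j) = μ j := Real.mul_self_sqrt (hμpos j).le
      have hnum : Real.sqrt (μ j) + (Real.sqrt (μ j))⁻¹
          = (1 + μ j) / Real.sqrt (μ j) := by
        rw [eq_div_iff hs.ne', add_mul, inv_mul_cancel₀ hs.ne', hss]; ring
      rw [hnum, div_div, mul_comm]
    rw [Finset.prod_congr rfl (fun j _ => hfac j)]
    rw [Finset.prod_div_distrib, Finset.prod_mul_distrib, Finset.prod_const]
    have hP : (0 : ℝ) < ∏ j, Real.sqrt (μ j) :=
      Finset.prod_pos (fun j _ => Real.sqrt_pos.2 (hμpos j))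
    rw [Finset.card_univ, Fintype.card_fin]
    field_simp
    have h2q : ((1 : ℝ) / 2) ^ q * 2 ^ q = 1 := by rw [← mul_pow]; norm_num
    linear_combination (∏ x, (1 + μ x)) * h2q
  unfold embOverlap
  rw [hkey]
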